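/- For all real a, b > 0, ∫_ℂ log⁺|z| · |P(z)|⁻¹ dℓ(z) ≥ log(√(ab)) · ∫_ℂ |P(z)|⁻¹ dℓ(z). (Equivalently, the probability measure C_P⁻¹ |P(z)|⁻¹ ℓ(z) gives ∫ log⁺|z| dμ ≥ log √(ab).) -/

import Mathlib

open MeasureTheory Real

/-- `log⁺ r = log (max 1 r)`. -/
noncomputable def logPlus (r : ℝ) : ℝ := Real.log (max 1 r)

noncomputable def Complex.abs : AbsoluteValue ℂ ℝ :=
  IsAbsoluteValue.toAbsoluteValue (norm : ℂ → ℝ)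

lemma Complex.abs_apply (z : ℂ) : Complex.abs z = ‖z‖ := rfl

lemma Complex.norm_eq_abs (z : ℂ) : ‖z‖ = Complex.abs z := rfl

@[simp] lemma Complex.abs_conj (z : ℂ) : Complex.abs ((starRingEnd ℂ) z) = Complex.abs z :=
  Complex.norm_conj z

@[simp] lemma Complex.abs_ofReal (r : ℝ) : Complex.abs (r : ℂ) = |r| := by
  rw [Complex.abs_apply, Complex.norm_real, Real.norm_eq_abs]

lemma Complex.continuous_abs : Continuous Complex.abs := continuous_norm

lemma Complex.normSq_eq_abs (z : ℂ) : Complex.normSq z = Complex.abs z ^ 2 := by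
  rw [Complex.abs_apply, Complex.normSq_eq_norm_sq]

lemma det_mul_aux (d : ℂ) :
    LinearMap.det (((ContinuousLinearMap.smulRight (1 : ℂ →L[ℂ] ℂ) d).restrictScalars ℝ :
      ℂ →L[ℝ] ℂ) : ℂ →ₗ[ℝ] ℂ) = Complex.normSq d := by
  rw [← LinearMap.det_toMatrix Complex.basisOneI]
  have h : ∀ z : ℂ, (((ContinuousLinearMap.smulRight (1 : ℂ →L[ℂ] ℂ) d).restrictScalars ℝ :
      ℂ →L[ℝ] ℂ) : ℂ →ₗ[ℝ] ℂ) z = z * d := fun z => rfl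
  rw [show (LinearMap.toMatrix Complex.basisOneI Complex.basisOneI) _ =
      Matrix.of ![![d.re, -d.im], ![d.im, d.re]] from ?_, Matrix.det_fin_two_of]
  · simp [Complex.normSq_apply]; try ring
  · ext i j
    rw [LinearMap.toMatrix_apply]
    fin_cases j <;> fin_cases i <;> simp [h, Complex.coe_basisOneI_repr]

lemma det_conj_aux :
    LinearMap.det ((Complex.conjCLE.toContinuousLinearMap : ℂ →L[ℝ] ℂ) : ℂ →ₗ[ℝ] ℂ) = -1 := by
  have : ((Complex.conjCLE.toContinuousLinearMap : ℂ →L[ℝ] ℂ) : ℂ →ₗ[ℝ] ℂ)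
      = Complex.conjAe.toLinearMap := by ext z; rfl
  rw [this, Complex.det_conjAe]

noncomputable def invDer (c : ℝ) (z : ℂ) : ℂ →L[ℝ] ℂ :=
  ((ContinuousLinearMap.smulRight (1 : ℂ →L[ℂ] ℂ)
      (-(c:ℂ) / ((starRingEnd ℂ) z)^2)).restrictScalars ℝ).comp
    (Complex.conjCLE.toContinuousLinearMap)

lemma invDer_det (c : ℝ) (z : ℂ) :
    |(invDer c z).det| = c^2 * ((Complex.abs z)^4)⁻¹ := by
  have : (invDer c z).det =
      Complex.normSq (-(c:ℂ) / ((starRingEnd ℂ) z)^2) * (-1) := by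
    rw [ContinuousLinearMap.det, invDer, ContinuousLinearMap.toLinearMap_comp, LinearMap.det_comp,
      det_mul_aux, det_conj_aux]
  rw [this]
  rw [map_div₀ Complex.normSq]
  have h1 : Complex.normSq (-(c:ℂ)) = c^2 := by
    rw [Complex.normSq_neg, Complex.normSq_ofReal]; ring
  have h2 : Complex.normSq ((starRingEnd ℂ) z ^ 2) = Complex.abs z ^ 4 := by
    rw [map_pow, Complex.normSq_conj, Complex.normSq_eq_abs]; ring
  rw [h1, h2, mul_neg_one, abs_neg, abs_of_nonneg (by positivity), div_eq_mul_inv]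

lemma hasFDerivAt_invMap (c : ℝ) {z : ℂ} (hz : z ≠ 0) :
    HasFDerivAt (fun w : ℂ => (c:ℂ) / (starRingEnd ℂ) w) (invDer c z) z := by
  have hz' : (starRingEnd ℂ) z ≠ 0 := by simpa using hz
  have h1 : HasDerivAt (fun w : ℂ => (c:ℂ) / w) (-(c:ℂ) / ((starRingEnd ℂ) z)^2)
      ((starRingEnd ℂ) z) := by
    simpa [div_eq_mul_inv, neg_div] using (hasDerivAt_inv hz').const_mul (c:ℂ)
  have h2 : HasFDerivAt (fun w : ℂ => (c:ℂ) / w)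
      (((ContinuousLinearMap.smulRight (1 : ℂ →L[ℂ] ℂ)
        (-(c:ℂ) / ((starRingEnd ℂ) z)^2)).restrictScalars ℝ)) ((starRingEnd ℂ) z) :=
    h1.hasFDerivAt.restrictScalars ℝ
  have h3 : HasFDerivAt (fun w : ℂ => (starRingEnd ℂ) w)
      (Complex.conjCLE.toContinuousLinearMap) z :=
    Complex.conjCLE.toContinuousLinearMap.hasFDerivAt
  exact h2.comp z h3

lemma key_cov (c : ℝ) (hc : 0 < c) (g : ℂ → ℝ) :
    (∫ z : ℂ, g z = ∫ z : ℂ, (c^2 * ((Complex.abs z)^4)⁻¹) * g ((c:ℂ) / (starRingEnd ℂ) z))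
    ∧ (Integrable g ↔
        Integrable (fun z : ℂ => (c^2 * ((Complex.abs z)^4)⁻¹) * g ((c:ℂ) / (starRingEnd ℂ) z))) := by
  classical
  set s : Set ℂ := {(0:ℂ)}ᶜ with hsdef
  have hs : MeasurableSet s := (measurableSet_singleton 0).compl
  have hc' : (c:ℂ) ≠ 0 := Complex.ofReal_ne_zero.mpr hc.ne'
  have hne : ∀ z ∈ s, (c:ℂ)/(starRingEnd ℂ) z ∈ s := by
    intro z hz
    have hz' : (starRingEnd ℂ) z ≠ 0 := by simpa [hsdef] using hz
    exact div_ne_zero hc' hz'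
  have hinvol : ∀ z ∈ s, (c:ℂ)/(starRingEnd ℂ) ((c:ℂ)/(starRingEnd ℂ) z) = z := by
    intro z hz
    have hz0 : z ≠ 0 := hz
    have hz' : (starRingEnd ℂ) z ≠ 0 := by simpa using hz0
    rw [map_div₀, Complex.conj_conj, Complex.conj_ofReal]
    rw [div_div_eq_mul_div, mul_comm, mul_div_assoc, div_self hc', mul_one]
  have hinj : Set.InjOn (fun z => (c:ℂ)/(starRingEnd ℂ) z) s := by
    intro x hx y hy h
    have h2 := congrArg (fun w => (c:ℂ)/(starRingEnd ℂ) w) h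
    simp only at h2
    rw [hinvol x hx, hinvol y hy] at h2
    exact h2
  have himg : (fun z => (c:ℂ)/(starRingEnd ℂ) z) '' s = s := by
    apply Set.Subset.antisymm
    · rintro _ ⟨z, hz, rfl⟩; exact hne z hz
    · intro z hz; exact ⟨_, hne z hz, hinvol z hz⟩
  have hder : ∀ z ∈ s, HasFDerivWithinAt (fun w => (c:ℂ)/(starRingEnd ℂ) w) (invDer c z) s z :=
    fun z hz => (hasFDerivAt_invMap c hz).hasFDerivWithinAt
  have hres : volume.restrict s = volume := by
    have h0 : s =ᵐ[volume] (Set.univ : Set ℂ) := by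
      rw [MeasureTheory.ae_eq_univ, hsdef, compl_compl]
      exact measure_singleton 0
    rw [Measure.restrict_congr_set h0, Measure.restrict_univ]
  have heq : ∀ z : ℂ, |(invDer c z).det| • g ((c:ℂ)/(starRingEnd ℂ) z)
      = (c^2 * ((Complex.abs z)^4)⁻¹) * g ((c:ℂ) / (starRingEnd ℂ) z) := by
    intro z; rw [invDer_det, smul_eq_mul]
  constructor
  · have h := integral_image_eq_integral_abs_det_fderiv_smul volume hs hder hinj g
    rw [himg] at h
    rw [hres] at h
    simp_rw [heq] at h
    exact h
  · have h := integrableOn_image_iff_integrableOn_abs_det_fderiv_smul volume hs hder hinj g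
    rw [himg] at h
    unfold IntegrableOn at h
    rw [hres] at h
    simp_rw [heq] at h
    exact h
open MeasureTheory Real


lemma logPlus_nonneg (r : ℝ) : 0 ≤ logPlus r :=
  Real.log_nonneg (le_max_left 1 r)

lemma log_le_logPlus {r : ℝ} (hr : 0 < r) : Real.log r ≤ logPlus r :=
  Real.log_le_log hr (le_max_right 1 r)

lemma logPlus_mono : Monotone logPlus := fun x y h =>
  Real.log_le_log (lt_of_lt_of_le one_pos (le_max_left 1 x)) (max_le_max le_rfl h)

lemma logPlus_eq_zero_of_le {r : ℝ} (hr : r ≤ 1) : logPlus r = 0 := by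
  rw [logPlus, max_eq_left hr, Real.log_one]

lemma logPlus_eq_log {r : ℝ} (hr : 1 ≤ r) : logPlus r = Real.log r := by
  rw [logPlus, max_eq_right hr]

lemma continuous_logPlus : Continuous logPlus := by
  have h : Continuous fun r : ℝ => max 1 r := continuous_const.max continuous_id
  exact h.log (fun x => by positivity)

lemma log_le_logPlus_add {c r : ℝ} (hc : 0 < c) (hr : 0 < r) :
    Real.log c ≤ logPlus r + logPlus (c / r) := by
  have h1 := log_le_logPlus hr
  have h2 := log_le_logPlus (div_pos hc hr)
  have h3 : Real.log c = Real.log r + Real.log (c / r) := by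
    rw [Real.log_div hc.ne' hr.ne']; ring
  linarith

-- reflection
lemma reflection_cov (g : ℂ → ℝ) :
    (∫ z : ℂ, g (-((starRingEnd ℂ) z)) = ∫ z : ℂ, g z)
    ∧ (Integrable (fun z : ℂ => g (-((starRingEnd ℂ) z))) ↔ Integrable g) := by
  set ρ : ℂ ≃ₗᵢ[ℝ] ℂ := Complex.conjLIE.trans (LinearIsometryEquiv.neg ℝ) with hρ
  have hmp : MeasurePreserving ρ := ρ.measurePreserving
  have hemb : MeasurableEmbedding ρ := ρ.toHomeomorph.measurableEmbedding
  have happ : ∀ z : ℂ, ρ z = -((starRingEnd ℂ) z) := fun z => rfl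
  constructor
  · have := hmp.integral_comp hemb g
    simpa [happ] using this
  · have := hmp.integrable_comp_emb hemb (g := g)
    constructor
    · intro h; exact this.mp h
    · intro h; exact this.mpr h
open MeasureTheory Real

lemma sqrt_two_le : Real.sqrt 2 ≤ 3/2 := by
  nlinarith [Real.sqrt_nonneg 2, Real.sq_sqrt (by norm_num : (0:ℝ) ≤ 2)]

lemma rpow_52_le {r : ℝ} (hr : 1 ≤ r) :
    (1+r)^((5:ℝ)/2) ≤ 6 * (Real.sqrt r)^5 := by
  have h0 : (0:ℝ) < r := lt_of_lt_of_le one_pos hr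
  set t := Real.sqrt r with ht
  have ht1 : 1 ≤ t := by
    rw [ht, show (1:ℝ) = Real.sqrt 1 by simp]
    exact Real.sqrt_le_sqrt hr
  have ht0 : 0 < t := lt_of_lt_of_le one_pos ht1
  have hrt : r = t^2 := (Real.sq_sqrt h0.le).symm
  have h2 : (1+r) ≤ 2*t^2 := by nlinarith
  have h3 : (1+r)^((5:ℝ)/2) ≤ (2*t^2)^((5:ℝ)/2) :=
    Real.rpow_le_rpow (by positivity) h2 (by norm_num)
  have h4 : (2*t^2)^((5:ℝ)/2) = 2^((5:ℝ)/2) * (t^2)^((5:ℝ)/2) :=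
    Real.mul_rpow (by norm_num) (by positivity)
  have h5 : ((t^2 : ℝ))^((5:ℝ)/2) = t^5 := by
    rw [← Real.rpow_natCast t 2, ← Real.rpow_mul ht0.le, ← Real.rpow_natCast t 5]
    norm_num
  have h6 : (2:ℝ)^((5:ℝ)/2) ≤ 6 := by
    rw [show ((5:ℝ)/2) = 2 + 1/2 by norm_num, Real.rpow_add (by norm_num : (0:ℝ) < 2)]
    have e1 : (2:ℝ)^(2:ℝ) = 4 := by
      rw [show (2:ℝ) = ((2:ℕ):ℝ) by norm_num, Real.rpow_natCast]; norm_num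
    have e2 : (2:ℝ)^((1:ℝ)/2) = Real.sqrt 2 := by
      rw [← Real.sqrt_eq_rpow]
    rw [e1, e2]
    nlinarith [sqrt_two_le]
  calc (1+r)^((5:ℝ)/2) ≤ 2^((5:ℝ)/2) * (t^2)^((5:ℝ)/2) := h4 ▸ h3
    _ = 2^((5:ℝ)/2) * t^5 := by rw [h5]
    _ ≤ 6 * t^5 := by nlinarith [pow_pos ht0 5]

lemma master_tail {r : ℝ} (hr : 1 ≤ r) :
    Real.sqrt r * (r^3)⁻¹ ≤ 6 * (1+r)^(-((5:ℝ)/2)) := by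
  have h0 : (0:ℝ) < r := lt_of_lt_of_le one_pos hr
  have ht0 : 0 < Real.sqrt r := Real.sqrt_pos.mpr h0
  have hrt : r = (Real.sqrt r)^2 := (Real.sq_sqrt h0.le).symm
  have hsq : (Real.sqrt r)^2 = r := Real.sq_sqrt h0.le
  have h6 : (Real.sqrt r)^6 = r^3 := by rw [show 6 = 2*3 from rfl, pow_mul, hsq]
  have h1 : Real.sqrt r * (r^3)⁻¹ = ((Real.sqrt r)^5)⁻¹ := by
    rw [← h6]
    field_simp
  have h2 : (1+r)^(-((5:ℝ)/2)) = ((1+r)^((5:ℝ)/2))⁻¹ :=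
    Real.rpow_neg (by positivity) _
  rw [h1, h2]
  have h3 := rpow_52_le hr
  have h4 : 0 < (Real.sqrt r)^5 := pow_pos ht0 5
  have h5 : 0 < (1+r)^((5:ℝ)/2) := Real.rpow_pos_of_pos (by positivity) _
  rw [inv_eq_one_div, inv_eq_one_div, mul_one_div, div_le_div_iff₀ h4 h5]
  linarith [h3]

lemma one_add_log_le {r : ℝ} (hr : 1 ≤ r) : 1 + Real.log r ≤ 3 * Real.sqrt r := by
  have h0 : (0:ℝ) < r := lt_of_lt_of_le one_pos hr
  have ht0 : 0 < Real.sqrt r := Real.sqrt_pos.mpr h0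
  have h1 : Real.log (Real.sqrt r) ≤ Real.sqrt r - 1 := Real.log_le_sub_one_of_pos ht0
  have h2 : Real.log (Real.sqrt r) = Real.log r / 2 := Real.log_sqrt h0.le
  nlinarith [Real.sqrt_nonneg r]

lemma inv_bound3 {y z s m n : ℝ} (hm : 0 < m) (hn : 0 < n) (hy : m ≤ y) (hz : n ≤ z)
    (hs : 0 ≤ s) : (y * z * s)⁻¹ ≤ m⁻¹ * n⁻¹ * s⁻¹ := by
  rcases hs.eq_or_lt with h|h
  · rw [← h]; simp
  · have hy0 : 0 < y := lt_of_lt_of_le hm hy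
    have hz0 : 0 < z := lt_of_lt_of_le hn hz
    rw [mul_inv, mul_inv]
    have h1 : y⁻¹ ≤ m⁻¹ := inv_anti₀ hm hy
    have h2 : z⁻¹ ≤ n⁻¹ := inv_anti₀ hn hz
    have h3 : y⁻¹ * z⁻¹ ≤ m⁻¹ * n⁻¹ :=
      mul_le_mul h1 h2 (by positivity) (by positivity)
    exact mul_le_mul_of_nonneg_right h3 (by positivity)

lemma intOn_inv_norm_ball : IntegrableOn (fun z : ℂ => (Complex.abs z)⁻¹) (Metric.ball (0:ℂ) 1) := by
  have hmain : IntegrableOn (fun z : ℂ => (Complex.abs z)⁻¹) (Metric.ball (0:ℂ) 1 \ {0}) := by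
    set s : Set ℂ := (Metric.closedBall (0:ℂ) 1)ᶜ with hsdef
    have hs : MeasurableSet s := Metric.isClosed_closedBall.measurableSet.compl
    have hmem : ∀ z : ℂ, z ∈ s ↔ 1 < Complex.abs z := by
      intro z
      rw [hsdef, Set.mem_compl_iff, Metric.mem_closedBall, Complex.dist_eq, sub_zero]
      exact not_le
    have hne0 : ∀ z ∈ s, z ≠ 0 := by
      intro z hz h0
      rw [hmem] at hz; rw [h0] at hz; norm_num at hz
    have hone : ((1:ℝ):ℂ) = (1:ℂ) := by norm_num
    have habsφ : ∀ z : ℂ, z ≠ 0 → Complex.abs (((1:ℝ):ℂ)/(starRingEnd ℂ) z) = (Complex.abs z)⁻¹ := by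
      intro z hz
      rw [map_div₀, Complex.abs_conj, hone, map_one, one_div]
    have hinvol : ∀ z : ℂ, z ≠ 0 →
        ((1:ℝ):ℂ)/(starRingEnd ℂ) (((1:ℝ):ℂ)/(starRingEnd ℂ) z) = z := by
      intro z hz
      have hz' : (starRingEnd ℂ) z ≠ 0 := by simpa using hz
      rw [map_div₀, Complex.conj_conj, Complex.conj_ofReal, hone]
      rw [one_div, inv_div, div_one]
    have hder : ∀ z ∈ s, HasFDerivWithinAt (fun w : ℂ => ((1:ℝ):ℂ)/(starRingEnd ℂ) w)
        (invDer 1 z) s z := fun z hz => (hasFDerivAt_invMap 1 (hne0 z hz)).hasFDerivWithinAt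
    have hinj : Set.InjOn (fun w : ℂ => ((1:ℝ):ℂ)/(starRingEnd ℂ) w) s := by
      intro x hx y hy h
      have h2 := congrArg (fun w => ((1:ℝ):ℂ)/(starRingEnd ℂ) w) h
      simp only at h2
      rw [hinvol x (hne0 x hx), hinvol y (hne0 y hy)] at h2
      exact h2
    have himg : (fun w : ℂ => ((1:ℝ):ℂ)/(starRingEnd ℂ) w) '' s = Metric.ball (0:ℂ) 1 \ {0} := by
      apply Set.Subset.antisymm
      · rintro _ ⟨z, hz, rfl⟩
        have h1 : 1 < Complex.abs z := (hmem z).mp hz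
        have h0 : z ≠ 0 := hne0 z hz
        constructor
        · rw [Metric.mem_ball, Complex.dist_eq, Complex.norm_eq_abs, sub_zero, habsφ z h0]
          rw [inv_lt_one_iff₀]
          right; exact h1
        · simp only [Set.mem_singleton_iff]
          intro hc
          have h3 := habsφ z h0
          rw [hc, map_zero] at h3
          have h4 : (0:ℝ) < (Complex.abs z)⁻¹ := inv_pos.mpr (Complex.abs.pos h0)
          rw [← h3] at h4
          exact lt_irrefl 0 h4
      · rintro w ⟨hw1, hw2⟩
        have hw0 : w ≠ 0 := hw2
        have hwa : 0 < Complex.abs w := by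
          simpa using Complex.abs.pos hw0
        have hwl : Complex.abs w < 1 := by
          rwa [Metric.mem_ball, Complex.dist_eq, Complex.norm_eq_abs, sub_zero] at hw1
        refine ⟨((1:ℝ):ℂ)/(starRingEnd ℂ) w, ?_, hinvol w hw0⟩
        rw [hmem, habsφ w hw0]
        exact (one_lt_inv₀ hwa).mpr hwl
    have h := integrableOn_image_iff_integrableOn_abs_det_fderiv_smul volume hs hder hinj
      (fun w => (Complex.abs w)⁻¹)
    rw [himg] at h
    rw [h]
    have hfun : ∀ z : ℂ, |(invDer 1 z).det| • (Complex.abs (((1:ℝ):ℂ)/(starRingEnd ℂ) z))⁻¹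
        = ((Complex.abs z)^4)⁻¹ * Complex.abs z := by
      intro z
      rw [invDer_det, smul_eq_mul]
      by_cases hz : z = 0
      · rw [hz]; simp
      · rw [habsφ z hz, inv_inv, one_pow, one_mul]
    simp_rw [hfun]
    apply Integrable.mono' (g := fun z : ℂ => 6 * (1+Complex.abs z)^(-((5:ℝ)/2)))
    · apply Integrable.integrableOn
      have hint := integrable_one_add_norm (E := ℂ) (μ := volume) (r := (5:ℝ)/2)
        (by rw [Complex.finrank_real_complex]; norm_num)
      have := hint.const_mul 6
      simpa [Complex.norm_eq_abs] using this
    · apply Measurable.aestronglyMeasurable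
      exact ((Complex.continuous_abs.pow 4).measurable.inv.mul Complex.continuous_abs.measurable)
    · rw [ae_restrict_iff' hs]
      apply Filter.Eventually.of_forall
      intro z hz
      have h1 : 1 < Complex.abs z := (hmem z).mp hz
      have h0 : (0:ℝ) < Complex.abs z := lt_trans one_pos h1
      have he : ((Complex.abs z)^4)⁻¹ * Complex.abs z = ((Complex.abs z)^3)⁻¹ := by
        field_simp
      rw [Real.norm_eq_abs, abs_of_nonneg (by positivity), he]
      have h2 : ((Complex.abs z)^3)⁻¹ ≤ Real.sqrt (Complex.abs z) * ((Complex.abs z)^3)⁻¹ := by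
        have : 1 ≤ Real.sqrt (Complex.abs z) := by
          rw [show (1:ℝ) = Real.sqrt 1 by simp]
          exact Real.sqrt_le_sqrt h1.le
        nlinarith [inv_pos.mpr (pow_pos h0 3)]
      exact le_trans h2 (master_tail h1.le)
  have hsub : Metric.ball (0:ℂ) 1 ⊆ (Metric.ball (0:ℂ) 1 \ {0}) ∪ {0} := by
    intro z hz
    by_cases h : z = 0
    · exact Or.inr (by simp [h])
    · exact Or.inl ⟨hz, h⟩
  exact (hmain.union (by
    have : volume.restrict ({(0:ℂ)} : Set ℂ) = 0 := by
      rw [Measure.restrict_eq_zero]; exact measure_singleton 0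
    rw [IntegrableOn, this]
    exact integrable_zero_measure)).mono_set hsub

lemma intOn_inv_ball (w₀ : ℂ) :
    IntegrableOn (fun z : ℂ => (Complex.abs (z - w₀))⁻¹) (Metric.ball w₀ 1) := by
  classical
  have h := (integrable_indicator_iff (measurableSet_ball (x := (0:ℂ)) (ε := 1))).mpr
    intOn_inv_norm_ball
  have h2 := h.comp_add_right (-w₀)
  have heq : (fun x : ℂ => (Metric.ball (0:ℂ) 1).indicator (fun z => (Complex.abs z)⁻¹) (x + -w₀))
      = (Metric.ball w₀ 1).indicator (fun z => (Complex.abs (z - w₀))⁻¹) := by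
    funext x
    have hmem : x + -w₀ ∈ Metric.ball (0:ℂ) 1 ↔ x ∈ Metric.ball w₀ 1 := by
      rw [Metric.mem_ball, Metric.mem_ball, Complex.dist_eq, Complex.dist_eq, sub_zero,
        ← sub_eq_add_neg]
    rw [Set.indicator_apply, Set.indicator_apply]
    by_cases hx : x ∈ Metric.ball w₀ 1
    · rw [if_pos (hmem.mpr hx), if_pos hx, ← sub_eq_add_neg]
    · rw [if_neg (fun hc => hx (hmem.mp hc)), if_neg hx]
  rw [heq] at h2
  exact (integrable_indicator_iff measurableSet_ball).mp h2

lemma integrable_H {a b : ℝ} (ha : 0 < a) (hb : 0 < b) :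
    Integrable (fun z : ℂ =>
      (1 + logPlus (Complex.abs z)) *
        (Complex.abs z * Complex.abs (z - (a:ℂ)) * Complex.abs (z + (b:ℂ)))⁻¹) := by
  set H := fun z : ℂ => (1 + logPlus (Complex.abs z)) *
      (Complex.abs z * Complex.abs (z - (a:ℂ)) * Complex.abs (z + (b:ℂ)))⁻¹ with hH
  have hcont1 : Continuous fun z : ℂ => 1 + logPlus (Complex.abs z) :=
    continuous_const.add (continuous_logPlus.comp Complex.continuous_abs)
  have hcont2 : Continuous fun z : ℂ =>
      Complex.abs z * Complex.abs (z - (a:ℂ)) * Complex.abs (z + (b:ℂ)) := by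
    apply Continuous.mul
    apply Continuous.mul
    · exact Complex.continuous_abs
    · exact Complex.continuous_abs.comp (continuous_id.sub continuous_const)
    · exact Complex.continuous_abs.comp (continuous_id.add continuous_const)
  have hHmeas : AEStronglyMeasurable H volume :=
    (hcont1.measurable.mul hcont2.measurable.inv).aestronglyMeasurable
  have hHnn : ∀ z, 0 ≤ H z := by
    intro z
    apply mul_nonneg
    · have := logPlus_nonneg (Complex.abs z); linarith
    · positivity
  have hHnorm : ∀ z, ‖H z‖ = H z := fun z => by
    rw [Real.norm_eq_abs, abs_of_nonneg (hHnn z)]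
  set ε := (min 1 (min a b))/2 with hε
  have hε0 : 0 < ε := by
    apply div_pos _ two_pos
    simp only [lt_min_iff]
    exact ⟨one_pos, ha, hb⟩
  have hε1 : ε ≤ 1/2 := by
    have : min 1 (min a b) ≤ 1 := min_le_left _ _
    rw [hε]; linarith
  have hεa : 2*ε ≤ a := by
    have : min 1 (min a b) ≤ a := le_trans (min_le_right _ _) (min_le_left _ _)
    rw [hε]; linarith
  have hεb : 2*ε ≤ b := by
    have : min 1 (min a b) ≤ b := le_trans (min_le_right _ _) (min_le_right _ _)
    rw [hε]; linarith
  set R := 2*(1+a+b) with hR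
  have hR1 : 1 ≤ R := by rw [hR]; linarith
  have hRa : 2*a ≤ R := by rw [hR]; linarith
  have hRb : 2*b ≤ R := by rw [hR]; linarith
  -- ball at 0
  have habs0 : ∀ z : ℂ, z ∈ Metric.ball (0:ℂ) ε → Complex.abs z < ε := by
    intro z hz; rwa [Metric.mem_ball, Complex.dist_eq, sub_zero] at hz
  have habsa : ∀ z : ℂ, z ∈ Metric.ball ((a:ℂ)) ε → Complex.abs (z - a) < ε := by
    intro z hz; rwa [Metric.mem_ball, Complex.dist_eq] at hz
  have habsb : ∀ z : ℂ, z ∈ Metric.ball ((-b:ℂ)) ε → Complex.abs (z + b) < ε := by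
    intro z hz; rw [Metric.mem_ball, Complex.dist_eq, Complex.norm_eq_abs] at hz
    simpa [sub_neg_eq_add] using hz
  have hs0 : IntegrableOn H (Metric.ball (0:ℂ) ε) := by
    apply Integrable.mono' (g := fun z : ℂ => ((a/2)⁻¹ * (b/2)⁻¹) * (Complex.abs z)⁻¹)
    · have h := (intOn_inv_ball 0).mono_set
        (Metric.ball_subset_ball (by linarith : ε ≤ 1))
      simp only [sub_zero] at h
      exact h.const_mul _
    · exact hHmeas.restrict
    · rw [ae_restrict_iff' measurableSet_ball]
      apply Filter.Eventually.of_forall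
      intro z hz
      have h1 : Complex.abs z < ε := habs0 z hz
      have hlp : logPlus (Complex.abs z) = 0 :=
        logPlus_eq_zero_of_le (by linarith)
      have hza : a/2 ≤ Complex.abs (z - a) := by
        have ht : Complex.abs ((a:ℂ)) ≤ Complex.abs (z - a) + Complex.abs z := by
          calc Complex.abs ((a:ℂ)) = Complex.abs ((z - ((a:ℂ))) * (-1) + z) := by ring_nf
            _ ≤ Complex.abs ((z - (a:ℂ)) * (-1)) + Complex.abs z := Complex.abs.add_le _ _
            _ = Complex.abs (z - (a:ℂ)) + Complex.abs z := by rw [map_mul]; simp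
        rw [Complex.abs_ofReal, abs_of_pos ha] at ht
        linarith
      have hzb : b/2 ≤ Complex.abs (z + b) := by
        have ht : Complex.abs ((b:ℂ)) ≤ Complex.abs (z + b) + Complex.abs z := by
          calc Complex.abs ((b:ℂ)) = Complex.abs ((z + (b:ℂ)) + z * (-1)) := by ring_nf
            _ ≤ Complex.abs (z + (b:ℂ)) + Complex.abs (z * (-1)) := Complex.abs.add_le _ _
            _ = Complex.abs (z + (b:ℂ)) + Complex.abs z := by rw [map_mul]; simp
        rw [Complex.abs_ofReal, abs_of_pos hb] at ht
        linarith
      rw [hHnorm z, hH]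
      simp only [hlp, add_zero, one_mul]
      rw [show Complex.abs z * Complex.abs (z - (a:ℂ)) * Complex.abs (z + (b:ℂ))
        = Complex.abs (z - (a:ℂ)) * Complex.abs (z + (b:ℂ)) * Complex.abs z from by ring]
      exact inv_bound3 (half_pos ha) (half_pos hb) hza hzb (Complex.abs.nonneg z)
  -- ball at a
  have hs1 : IntegrableOn H (Metric.ball ((a:ℂ)) ε) := by
    apply Integrable.mono' (g := fun z : ℂ =>
      ((1 + logPlus (a+1)) * ((a/2)⁻¹ * b⁻¹)) * (Complex.abs (z - (a:ℂ)))⁻¹)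
    · exact ((intOn_inv_ball ((a:ℂ))).mono_set
        (Metric.ball_subset_ball (by linarith : ε ≤ 1))).const_mul _
    · exact hHmeas.restrict
    · rw [ae_restrict_iff' measurableSet_ball]
      apply Filter.Eventually.of_forall
      intro z hz
      have h1 : Complex.abs (z - a) < ε := habsa z hz
      have hzabs : Complex.abs z ≤ a + 1 := by
        have ht : Complex.abs z ≤ Complex.abs ((a:ℂ)) + Complex.abs (z - a) := by
          calc Complex.abs z = Complex.abs ((a:ℂ) + (z - (a:ℂ))) := by ring_nf
            _ ≤ _ := Complex.abs.add_le _ _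
        rw [Complex.abs_ofReal, abs_of_pos ha] at ht
        linarith
      have hf : 1 + logPlus (Complex.abs z) ≤ 1 + logPlus (a+1) := by
        have := logPlus_mono hzabs; linarith
      have hza : a/2 ≤ Complex.abs z := by
        have ht : Complex.abs ((a:ℂ)) ≤ Complex.abs z + Complex.abs (z - a) := by
          calc Complex.abs ((a:ℂ)) = Complex.abs (z + (z - (a:ℂ)) * (-1)) := by ring_nf
            _ ≤ Complex.abs z + Complex.abs ((z - (a:ℂ)) * (-1)) := Complex.abs.add_le _ _
            _ = Complex.abs z + Complex.abs (z - (a:ℂ)) := by rw [map_mul]; simp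
        rw [Complex.abs_ofReal, abs_of_pos ha] at ht
        linarith
      have hzb : b ≤ Complex.abs (z + b) := by
        have ht : Complex.abs ((a:ℂ) + (b:ℂ)) ≤ Complex.abs (z + b) + Complex.abs (z - a) := by
          calc Complex.abs ((a:ℂ) + (b:ℂ))
              = Complex.abs ((z + (b:ℂ)) + (z - (a:ℂ)) * (-1)) := by ring_nf
            _ ≤ Complex.abs (z + (b:ℂ)) + Complex.abs ((z - (a:ℂ)) * (-1)) :=
                Complex.abs.add_le _ _
            _ = Complex.abs (z + (b:ℂ)) + Complex.abs (z - (a:ℂ)) := by rw [map_mul]; simp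
        have hab : Complex.abs ((a:ℂ) + (b:ℂ)) = a + b := by
          rw [show ((a:ℂ) + (b:ℂ)) = (((a+b : ℝ)):ℂ) by push_cast; ring,
            Complex.abs_ofReal, abs_of_pos (by linarith)]
        rw [hab] at ht
        linarith
      have hinv : (Complex.abs z * Complex.abs (z - (a:ℂ)) * Complex.abs (z + (b:ℂ)))⁻¹
          ≤ (a/2)⁻¹ * b⁻¹ * (Complex.abs (z - (a:ℂ)))⁻¹ := by
        rw [show Complex.abs z * Complex.abs (z - (a:ℂ)) * Complex.abs (z + (b:ℂ))
          = Complex.abs z * Complex.abs (z + (b:ℂ)) * Complex.abs (z - (a:ℂ)) from by ring]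
        exact inv_bound3 (half_pos ha) hb hza hzb (Complex.abs.nonneg _)
      rw [hHnorm z]
      calc H z ≤ (1 + logPlus (a+1)) * ((a/2)⁻¹ * b⁻¹ * (Complex.abs (z - (a:ℂ)))⁻¹) := by
            apply mul_le_mul hf hinv (by positivity)
            have := logPlus_nonneg (a+1); linarith
        _ = ((1 + logPlus (a+1)) * ((a/2)⁻¹ * b⁻¹)) * (Complex.abs (z - (a:ℂ)))⁻¹ := by ring
  -- ball at -b
  have hs2 : IntegrableOn H (Metric.ball ((-b:ℝ) : ℂ) ε) := by
    apply Integrable.mono' (g := fun z : ℂ =>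
      ((1 + logPlus (b+1)) * ((b/2)⁻¹ * a⁻¹)) * (Complex.abs (z - ((-b:ℝ):ℂ)))⁻¹)
    · exact ((intOn_inv_ball (((-b:ℝ)):ℂ)).mono_set
        (Metric.ball_subset_ball (by linarith : ε ≤ 1))).const_mul _
    · exact hHmeas.restrict
    · rw [ae_restrict_iff' measurableSet_ball]
      apply Filter.Eventually.of_forall
      intro z hz
      have hz' : z ∈ Metric.ball ((-b:ℂ)) ε := by
        have : (((-b:ℝ)):ℂ) = ((-b:ℂ)) := by push_cast; ring
        rwa [this] at hz
      have h1 : Complex.abs (z + b) < ε := habsb z hz'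
      have hsub : Complex.abs (z - ((-b:ℝ):ℂ)) = Complex.abs (z + b) := by
        rw [show z - ((-b:ℝ):ℂ) = z + (b:ℂ) from by push_cast; ring]
      have hzabs : Complex.abs z ≤ b + 1 := by
        have ht : Complex.abs z ≤ Complex.abs ((b:ℂ)) + Complex.abs (z + b) := by
          calc Complex.abs z = Complex.abs ((b:ℂ) * (-1) + (z + (b:ℂ))) := by ring_nf
            _ ≤ Complex.abs ((b:ℂ) * (-1)) + Complex.abs (z + (b:ℂ)) := Complex.abs.add_le _ _
            _ = Complex.abs ((b:ℂ)) + Complex.abs (z + (b:ℂ)) := by rw [map_mul]; simp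
        rw [Complex.abs_ofReal, abs_of_pos hb] at ht
        linarith
      have hf : 1 + logPlus (Complex.abs z) ≤ 1 + logPlus (b+1) := by
        have := logPlus_mono hzabs; linarith
      have hzb2 : b/2 ≤ Complex.abs z := by
        have ht : Complex.abs ((b:ℂ)) ≤ Complex.abs z + Complex.abs (z + b) := by
          calc Complex.abs ((b:ℂ)) = Complex.abs (z * (-1) + (z + (b:ℂ))) := by ring_nf
            _ ≤ Complex.abs (z * (-1)) + Complex.abs (z + (b:ℂ)) := Complex.abs.add_le _ _
            _ = Complex.abs z + Complex.abs (z + (b:ℂ)) := by rw [map_mul]; simp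
        rw [Complex.abs_ofReal, abs_of_pos hb] at ht
        linarith
      have hza2 : a ≤ Complex.abs (z - a) := by
        have ht : Complex.abs ((a:ℂ) + (b:ℂ)) ≤ Complex.abs (z - a) + Complex.abs (z + b) := by
          calc Complex.abs ((a:ℂ) + (b:ℂ))
              = Complex.abs ((z - (a:ℂ)) * (-1) + (z + (b:ℂ))) := by ring_nf
            _ ≤ Complex.abs ((z - (a:ℂ)) * (-1)) + Complex.abs (z + (b:ℂ)) :=
                Complex.abs.add_le _ _
            _ = Complex.abs (z - (a:ℂ)) + Complex.abs (z + (b:ℂ)) := by rw [map_mul]; simp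
        have hab : Complex.abs ((a:ℂ) + (b:ℂ)) = a + b := by
          rw [show ((a:ℂ) + (b:ℂ)) = (((a+b : ℝ)):ℂ) by push_cast; ring,
            Complex.abs_ofReal, abs_of_pos (by linarith)]
        rw [hab] at ht
        linarith
      have hinv : (Complex.abs z * Complex.abs (z - (a:ℂ)) * Complex.abs (z + (b:ℂ)))⁻¹
          ≤ (b/2)⁻¹ * a⁻¹ * (Complex.abs (z + (b:ℂ)))⁻¹ :=
        inv_bound3 (half_pos hb) ha hzb2 hza2 (Complex.abs.nonneg _)
      rw [hHnorm z]
      calc H z ≤ (1 + logPlus (b+1)) * ((b/2)⁻¹ * a⁻¹ * (Complex.abs (z + (b:ℂ)))⁻¹) := by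
            apply mul_le_mul hf hinv (by positivity)
            have := logPlus_nonneg (b+1); linarith
        _ = ((1 + logPlus (b+1)) * ((b/2)⁻¹ * a⁻¹)) * (Complex.abs (z - ((-b:ℝ):ℂ)))⁻¹ := by
            rw [hsub]; ring
  set U : Set ℂ := Metric.ball (0:ℂ) ε ∪ Metric.ball ((a:ℂ)) ε ∪ Metric.ball (((-b:ℝ)):ℂ) ε
    with hU
  have hUopen : IsOpen U := ((Metric.isOpen_ball.union Metric.isOpen_ball).union Metric.isOpen_ball)
  -- compact middle part
  have hsK : IntegrableOn H (Metric.closedBall (0:ℂ) R \ U) := by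
    apply ContinuousOn.integrableOn_compact ((isCompact_closedBall _ _).diff hUopen)
    apply ContinuousOn.mul hcont1.continuousOn
    apply ContinuousOn.inv₀ hcont2.continuousOn
    intro z hz
    have hz0 : z ∉ Metric.ball (0:ℂ) ε := fun hc => hz.2 (Or.inl (Or.inl hc))
    have hz1 : z ∉ Metric.ball ((a:ℂ)) ε := fun hc => hz.2 (Or.inl (Or.inr hc))
    have hz2 : z ∉ Metric.ball (((-b:ℝ)):ℂ) ε := fun hc => hz.2 (Or.inr hc)
    have h0 : ε ≤ Complex.abs z := by
      by_contra hc
      exact hz0 (by rw [Metric.mem_ball, Complex.dist_eq, Complex.norm_eq_abs, sub_zero]; linarith)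
    have h1 : ε ≤ Complex.abs (z - a) := by
      by_contra hc
      exact hz1 (by rw [Metric.mem_ball, Complex.dist_eq, Complex.norm_eq_abs]; linarith)
    have h2 : ε ≤ Complex.abs (z + b) := by
      by_contra hc
      apply hz2
      rw [Metric.mem_ball, Complex.dist_eq, Complex.norm_eq_abs]
      rw [show z - (((-b:ℝ)):ℂ) = z + (b:ℂ) from by push_cast; ring]
      linarith
    have : 0 < Complex.abs z * Complex.abs (z - (a:ℂ)) * Complex.abs (z + (b:ℂ)) := by
      apply mul_pos (mul_pos _ _) _ <;> linarith
    exact ne_of_gt this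
  -- tail
  have hsT : IntegrableOn H ((Metric.closedBall (0:ℂ) R)ᶜ) := by
    apply Integrable.mono' (g := fun z : ℂ => 12 * (6 * (1 + Complex.abs z)^(-((5:ℝ)/2))))
    · apply Integrable.integrableOn
      have hint := integrable_one_add_norm (E := ℂ) (μ := volume) (r := (5:ℝ)/2)
        (by rw [Complex.finrank_real_complex]; norm_num)
      have := (hint.const_mul 6).const_mul 12
      simpa [Complex.norm_eq_abs, mul_assoc] using this
    · exact hHmeas.restrict
    · rw [ae_restrict_iff' Metric.isClosed_closedBall.measurableSet.compl]
      apply Filter.Eventually.of_forall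
      intro z hz
      have hzR : R < Complex.abs z := by
        rw [Set.mem_compl_iff, Metric.mem_closedBall, Complex.dist_eq, Complex.norm_eq_abs, sub_zero] at hz
        linarith [not_le.mp hz]
      set r := Complex.abs z with hr
      have hr1 : 1 ≤ r := by linarith
      have hr0 : 0 < r := by linarith
      have hza : r/2 ≤ Complex.abs (z - a) := by
        have ht : Complex.abs z ≤ Complex.abs (z - a) + Complex.abs ((a:ℂ)) := by
          calc Complex.abs z = Complex.abs ((z - (a:ℂ)) + (a:ℂ)) := by ring_nf
            _ ≤ _ := Complex.abs.add_le _ _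
        rw [Complex.abs_ofReal, abs_of_pos ha] at ht
        have : a ≤ r/2 := by linarith
        linarith
      have hzb : r/2 ≤ Complex.abs (z + b) := by
        have ht : Complex.abs z ≤ Complex.abs (z + b) + Complex.abs ((b:ℂ)) := by
          calc Complex.abs z = Complex.abs ((z + (b:ℂ)) + (b:ℂ) * (-1)) := by ring_nf
            _ ≤ Complex.abs (z + (b:ℂ)) + Complex.abs ((b:ℂ) * (-1)) := Complex.abs.add_le _ _
            _ = Complex.abs (z + (b:ℂ)) + Complex.abs ((b:ℂ)) := by rw [map_mul]; simp
        rw [Complex.abs_ofReal, abs_of_pos hb] at ht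
        have : b ≤ r/2 := by linarith
        linarith
      have hfac : 1 + logPlus r = 1 + Real.log r := by rw [logPlus_eq_log hr1]
      have hlog : 1 + Real.log r ≤ 3 * Real.sqrt r := one_add_log_le hr1
      have hprod : r^3/4 ≤ r * Complex.abs (z - (a:ℂ)) * Complex.abs (z + (b:ℂ)) := by
        have h1 : (r/2)*(r/2) ≤ Complex.abs (z - (a:ℂ)) * Complex.abs (z + (b:ℂ)) :=
          mul_le_mul hza hzb (by positivity) (Complex.abs.nonneg _)
        have h2 := mul_le_mul_of_nonneg_left h1 hr0.le
        calc r^3/4 = r * ((r/2)*(r/2)) := by ring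
          _ ≤ r * (Complex.abs (z - (a:ℂ)) * Complex.abs (z + (b:ℂ))) := h2
          _ = _ := by ring
      have hinv : (r * Complex.abs (z - (a:ℂ)) * Complex.abs (z + (b:ℂ)))⁻¹ ≤ 4 * (r^3)⁻¹ := by
        have h4 : (0:ℝ) < r^3/4 := by positivity
        have := inv_anti₀ h4 hprod
        rw [show (r^3/4 : ℝ)⁻¹ = 4 * (r^3)⁻¹ from by field_simp] at this
        exact this
      rw [hHnorm z]
      calc H z = (1 + logPlus r) * (r * Complex.abs (z - (a:ℂ)) * Complex.abs (z + (b:ℂ)))⁻¹ :=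
            rfl
        _ ≤ (3 * Real.sqrt r) * (4 * (r^3)⁻¹) := by
            apply mul_le_mul (by rw [hfac]; exact hlog) hinv (by positivity)
            positivity
        _ = 12 * (Real.sqrt r * (r^3)⁻¹) := by ring
        _ ≤ 12 * (6 * (1 + r)^(-((5:ℝ)/2))) := by
            have := master_tail hr1
            nlinarith [this]
  -- cover
  rw [← integrableOn_univ]
  have hcover : (Set.univ : Set ℂ) ⊆
      (U ∪ (Metric.closedBall (0:ℂ) R \ U)) ∪ (Metric.closedBall (0:ℂ) R)ᶜ := by
    intro z _
    by_cases hzR : z ∈ Metric.closedBall (0:ℂ) R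
    · by_cases hzU : z ∈ U
      · exact Or.inl (Or.inl hzU)
      · exact Or.inl (Or.inr ⟨hzR, hzU⟩)
    · exact Or.inr hzR
  exact ((((hs0.union hs1).union hs2).union hsK).union hsT).mono_set hcover
theorem stmt10 (a b : ℝ) (ha : 0 < a) (hb : 0 < b) :
    Real.log (Real.sqrt (a * b)) *
        ∫ z : ℂ, ‖z * (z - (a:ℂ)) * (z + (b:ℂ))‖⁻¹
      ≤ ∫ z : ℂ, logPlus ‖z‖ *
          ‖z * (z - (a:ℂ)) * (z + (b:ℂ))‖⁻¹ := by
  show Real.log (Real.sqrt (a * b)) *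
        ∫ z : ℂ, (Complex.abs (z * (z - (a:ℂ)) * (z + (b:ℂ))))⁻¹
      ≤ ∫ z : ℂ, logPlus (Complex.abs z) *
          (Complex.abs (z * (z - (a:ℂ)) * (z + (b:ℂ))))⁻¹
  have hab : (0:ℝ) < a * b := mul_pos ha hb
  -- measurability
  have hcontP : Continuous fun z : ℂ => Complex.abs (z * (z - (a:ℂ)) * (z + (b:ℂ))) :=
    Complex.continuous_abs.comp (by continuity)
  have hmP : Measurable fun z : ℂ => (Complex.abs (z * (z - (a:ℂ)) * (z + (b:ℂ))))⁻¹ :=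
    hcontP.measurable.inv
  have hmA : Measurable fun z : ℂ => logPlus (Complex.abs z) :=
    (continuous_logPlus.comp Complex.continuous_abs).measurable
  have habsP : ∀ z : ℂ, Complex.abs (z * (z - (a:ℂ)) * (z + (b:ℂ)))
      = Complex.abs z * Complex.abs (z - (a:ℂ)) * Complex.abs (z + (b:ℂ)) := by
    intro z; rw [map_mul, map_mul]
  -- basic P-integrabilities
  have hH := integrable_H ha hb
  have hP1 : Integrable (fun z : ℂ => (Complex.abs (z * (z - (a:ℂ)) * (z + (b:ℂ))))⁻¹) := by
    apply hH.mono' hmP.aestronglyMeasurable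
    apply Filter.Eventually.of_forall
    intro z
    rw [Real.norm_eq_abs, abs_of_nonneg (by positivity), habsP z]
    apply le_mul_of_one_le_left (by positivity)
    have := logPlus_nonneg (Complex.abs z); linarith
  have hP2 : Integrable (fun z : ℂ => logPlus (Complex.abs z) *
      (Complex.abs (z * (z - (a:ℂ)) * (z + (b:ℂ))))⁻¹) := by
    apply hH.mono' (hmA.mul hmP).aestronglyMeasurable
    apply Filter.Eventually.of_forall
    intro z
    have h0 := logPlus_nonneg (Complex.abs z)
    simp only [Pi.mul_apply]
    rw [Real.norm_eq_abs, abs_of_nonneg (mul_nonneg h0 (by positivity)), habsP z]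
    apply mul_le_mul_of_nonneg_right (by linarith) (by positivity)
  -- reflection identities
  have hkey2 : ∀ z : ℂ, Complex.abs (-((starRingEnd ℂ) z)) = Complex.abs z := by
    intro z; rw [map_neg_eq_map, Complex.abs_conj]
  have hkey : ∀ z : ℂ, Complex.abs ((-((starRingEnd ℂ) z)) * (-((starRingEnd ℂ) z) - (a:ℂ)) *
      (-((starRingEnd ℂ) z) + (b:ℂ))) = Complex.abs (z * (z - (b:ℂ)) * (z + (a:ℂ))) := by
    intro z
    have hc : (-((starRingEnd ℂ) z)) * (-((starRingEnd ℂ) z) - (a:ℂ)) *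
        (-((starRingEnd ℂ) z) + (b:ℂ)) = -((starRingEnd ℂ) (z * (z + (a:ℂ)) * (z - (b:ℂ)))) := by
      simp only [map_mul, map_add, map_sub, Complex.conj_ofReal]
      ring
    rw [hc, map_neg_eq_map, Complex.abs_conj]
    congr 1
    ring
  -- Q-integrals via reflection
  obtain ⟨hrQ1, hrQ1int⟩ := reflection_cov
    (fun z : ℂ => (Complex.abs (z * (z - (a:ℂ)) * (z + (b:ℂ))))⁻¹)
  simp only [hkey] at hrQ1 hrQ1int
  obtain ⟨hrQ2, hrQ2int⟩ := reflection_cov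
    (fun z : ℂ => logPlus (Complex.abs z) * (Complex.abs (z * (z - (a:ℂ)) * (z + (b:ℂ))))⁻¹)
  simp only [hkey, hkey2] at hrQ2 hrQ2int
  -- hrQ1 : ∫ pQ = ∫ pP ; hrQ1int : Integrable pQ ↔ Integrable pP ; similarly for A·
  have hQ1 : Integrable (fun z : ℂ => (Complex.abs (z * (z - (b:ℂ)) * (z + (a:ℂ))))⁻¹) :=
    hrQ1int.mpr hP1
  have hQ2 : Integrable (fun z : ℂ => logPlus (Complex.abs z) *
      (Complex.abs (z * (z - (b:ℂ)) * (z + (a:ℂ))))⁻¹) := hrQ2int.mpr hP2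
  -- inversion
  obtain ⟨hV, hVint⟩ := key_cov (a*b) hab
    (fun z : ℂ => logPlus (Complex.abs z) * (Complex.abs (z * (z - (a:ℂ)) * (z + (b:ℂ))))⁻¹)
  have hki : ∀ z : ℂ, ((a*b)^2 * ((Complex.abs z)^4)⁻¹) *
      (logPlus (Complex.abs (((a*b:ℝ):ℂ)/(starRingEnd ℂ) z)) *
        (Complex.abs ((((a*b:ℝ):ℂ)/(starRingEnd ℂ) z) * ((((a*b:ℝ):ℂ)/(starRingEnd ℂ) z) - (a:ℂ))
          * ((((a*b:ℝ):ℂ)/(starRingEnd ℂ) z) + (b:ℂ))))⁻¹)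
      = logPlus (a*b / Complex.abs z) * (Complex.abs (z * (z - (b:ℂ)) * (z + (a:ℂ))))⁻¹ := by
    intro z
    by_cases hz : z = 0
    · rw [hz]
      simp
    · have hz' : (starRingEnd ℂ) z ≠ 0 := by simpa using hz
      have hr0 : 0 < Complex.abs z := Complex.abs.pos hz
      have habsφ : Complex.abs (((a*b:ℝ):ℂ)/(starRingEnd ℂ) z) = (a*b) / Complex.abs z := by
        rw [map_div₀, Complex.abs_ofReal, Complex.abs_conj, abs_of_pos hab]
      have hC : (((a*b:ℝ):ℂ)/(starRingEnd ℂ) z) * ((((a*b:ℝ):ℂ)/(starRingEnd ℂ) z) - (a:ℂ))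
          * ((((a*b:ℝ):ℂ)/(starRingEnd ℂ) z) + (b:ℂ))
          = ((a:ℂ)^2 * (b:ℂ)^2) * (((b:ℂ) - (starRingEnd ℂ) z) * ((a:ℂ) + (starRingEnd ℂ) z))
            / ((starRingEnd ℂ) z)^3 := by
        field_simp
        push_cast
        ring
      have habsC : Complex.abs ((((a*b:ℝ):ℂ)/(starRingEnd ℂ) z) *
          ((((a*b:ℝ):ℂ)/(starRingEnd ℂ) z) - (a:ℂ)) * ((((a*b:ℝ):ℂ)/(starRingEnd ℂ) z) + (b:ℂ)))
          = (a^2 * b^2) * (Complex.abs (z - (b:ℂ)) * Complex.abs (z + (a:ℂ)))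
            / (Complex.abs z)^3 := by
        have e1 : Complex.abs ((b:ℂ) - (starRingEnd ℂ) z) = Complex.abs (z - (b:ℂ)) := by
          rw [show (b:ℂ) - (starRingEnd ℂ) z = (starRingEnd ℂ) ((b:ℂ) - z) from by
              rw [map_sub, Complex.conj_ofReal], Complex.abs_conj,
            show (b:ℂ) - z = -(z - (b:ℂ)) from by ring, map_neg_eq_map]
        have e2 : Complex.abs ((a:ℂ) + (starRingEnd ℂ) z) = Complex.abs (z + (a:ℂ)) := by
          rw [show (a:ℂ) + (starRingEnd ℂ) z = (starRingEnd ℂ) ((a:ℂ) + z) from by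
              rw [map_add, Complex.conj_ofReal], Complex.abs_conj, add_comm]
        rw [hC]
        simp only [map_div₀, map_mul, map_pow, Complex.abs_conj, Complex.abs_ofReal,
          abs_of_pos ha, abs_of_pos hb]
        rw [e1, e2]
      rw [habsφ, habsC, show Complex.abs (z * (z - (b:ℂ)) * (z + (a:ℂ)))
        = Complex.abs z * Complex.abs (z - (b:ℂ)) * Complex.abs (z + (a:ℂ)) from by
          rw [map_mul, map_mul]]
      set r := Complex.abs z
      set v := Complex.abs (z - (b:ℂ))
      set w := Complex.abs (z + (a:ℂ))
      by_cases hv : v = 0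
      · simp [hv]
      by_cases hw : w = 0
      · simp [hw]
      field_simp
  simp only [hki] at hV hVint
  -- now the final computation
  have hQ3 : Integrable (fun z : ℂ => logPlus (a*b / Complex.abs z) *
      (Complex.abs (z * (z - (b:ℂ)) * (z + (a:ℂ))))⁻¹) := hVint.mp hP2
  have hsum : ∫ z : ℂ, (logPlus (Complex.abs z) + logPlus (a*b/Complex.abs z)) *
        (Complex.abs (z * (z - (b:ℂ)) * (z + (a:ℂ))))⁻¹
      = (∫ z : ℂ, logPlus (Complex.abs z) * (Complex.abs (z * (z - (b:ℂ)) * (z + (a:ℂ))))⁻¹)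
        + ∫ z : ℂ, logPlus (a*b/Complex.abs z) *
            (Complex.abs (z * (z - (b:ℂ)) * (z + (a:ℂ))))⁻¹ := by
    simp_rw [add_mul]
    exact integral_add hQ2 hQ3
  have hgint : Integrable (fun z : ℂ =>
      (logPlus (Complex.abs z) + logPlus (a*b/Complex.abs z)) *
        (Complex.abs (z * (z - (b:ℂ)) * (z + (a:ℂ))))⁻¹) := by
    exact (hQ2.add hQ3).congr (Filter.Eventually.of_forall fun z => (add_mul _ _ _).symm)
  have hmono : ∫ z : ℂ, Real.log (a*b) * (Complex.abs (z * (z - (b:ℂ)) * (z + (a:ℂ))))⁻¹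
      ≤ ∫ z : ℂ, (logPlus (Complex.abs z) + logPlus (a*b/Complex.abs z)) *
          (Complex.abs (z * (z - (b:ℂ)) * (z + (a:ℂ))))⁻¹ := by
    apply integral_mono (hQ1.const_mul _) hgint
    intro z
    by_cases hz : z = 0
    · simp [hz]
    · exact mul_le_mul_of_nonneg_right
        (log_le_logPlus_add hab (Complex.abs.pos hz)) (by positivity)
  have hfin : Real.log (a*b) * (∫ z : ℂ, (Complex.abs (z * (z - (a:ℂ)) * (z + (b:ℂ))))⁻¹)
      ≤ 2 * ∫ z : ℂ, logPlus (Complex.abs z) *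
          (Complex.abs (z * (z - (a:ℂ)) * (z + (b:ℂ))))⁻¹ := by
    calc Real.log (a*b) * (∫ z : ℂ, (Complex.abs (z * (z - (a:ℂ)) * (z + (b:ℂ))))⁻¹)
        = Real.log (a*b) * (∫ z : ℂ, (Complex.abs (z * (z - (b:ℂ)) * (z + (a:ℂ))))⁻¹) := by
          rw [hrQ1]
      _ = ∫ z : ℂ, Real.log (a*b) * (Complex.abs (z * (z - (b:ℂ)) * (z + (a:ℂ))))⁻¹ :=
          (integral_const_mul _ _).symm
      _ ≤ _ := hmono
      _ = _ := hsum
      _ = (∫ z : ℂ, logPlus (Complex.abs z) * (Complex.abs (z * (z - (a:ℂ)) * (z + (b:ℂ))))⁻¹)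
          + ∫ z : ℂ, logPlus (Complex.abs z) *
              (Complex.abs (z * (z - (a:ℂ)) * (z + (b:ℂ))))⁻¹ := by
          rw [hrQ2, ← hV]
      _ = 2 * ∫ z : ℂ, logPlus (Complex.abs z) *
            (Complex.abs (z * (z - (a:ℂ)) * (z + (b:ℂ))))⁻¹ := by ring
  rw [Real.log_sqrt hab.le]
  linarith [hfin]
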